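/- arXiv:1306.6104 — 2 statements merged into one kernel-verified Lean document; each statement's English description precedes it below -/
import Mathlib

section
/- Let (c_r) be a sequence of positive reals with Σ_r c_r < ∞, and let μ_r be probability measures on a measurable space such that for every measurable set E and every r, e^{-c_r} ≤ μ_r(E)/μ_{r+1}(E) ≤ e^{c_r} whenever μ_{r+1}(E) > 0. Then for each measurable E the limit μ(E) := lim_{r→∞} μ_r(E) exists, and moreover e^{-Σ_{s≥r} c_s} ≤ μ_r(E)/μ(E) ≤ e^{Σ_{s≥r} c_s} whenever μ(E) > 0. -/
open Filter MeasureTheory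

/-- Abstract Cauchy-type argument: if consecutive probability measures are
multiplicatively `e^{±c_r}`-close with `Σ c_r < ∞`, then `μ_r(E)` converges for
every measurable `E`, with explicit two-sided tail bounds on the ratio to the limit. -/
theorem limit_of_multiplicatively_cauchy_measures
    {Ω : Type*} [MeasurableSpace Ω]
    (μ : ℕ → Measure Ω) [∀ r, IsProbabilityMeasure (μ r)]
    (c : ℕ → ℝ) (hc : ∀ r, 0 < c r) (hsum : Summable c)
    (hstep : ∀ (E : Set Ω), MeasurableSet E → ∀ r : ℕ,
      0 < ((μ (r + 1)) E).toReal →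
        Real.exp (-(c r)) ≤ ((μ r) E).toReal / ((μ (r + 1)) E).toReal ∧
        ((μ r) E).toReal / ((μ (r + 1)) E).toReal ≤ Real.exp (c r)) :
    ∀ (E : Set Ω), MeasurableSet E → ∃ l : ℝ,
      Tendsto (fun r => ((μ r) E).toReal) atTop (nhds l) ∧
      (0 < l → ∀ r : ℕ,
        Real.exp (-(∑' s : ℕ, c (r + s))) ≤ ((μ r) E).toReal / l ∧
        ((μ r) E).toReal / l ≤ Real.exp (∑' s : ℕ, c (r + s))) := by
  intro E hE
  set a : ℕ → ℝ := fun r => ((μ r) E).toReal with ha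
  have ha_nonneg : ∀ r, 0 ≤ a r := fun r => ENNReal.toReal_nonneg
  by_cases hpos : ∀ r, 0 < a r
  · -- positive case
    set b : ℕ → ℝ := fun r => Real.log (a r) with hb
    set d : ℕ → ℝ := fun r => b (r + 1) - b r with hd
    have hdabs : ∀ r, |d r| ≤ c r := by
      intro r
      obtain ⟨h1, h2⟩ := hstep E hE r (hpos (r + 1))
      have hq : 0 < a r / a (r + 1) := div_pos (hpos r) (hpos (r + 1))
      have hlog1 : -(c r) ≤ Real.log (a r / a (r + 1)) :=
        (Real.le_log_iff_exp_le hq).2 h1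
      have hlog2 : Real.log (a r / a (r + 1)) ≤ c r :=
        (Real.log_le_iff_le_exp hq).2 h2
      have hld : Real.log (a r / a (r + 1)) = b r - b (r + 1) :=
        Real.log_div (hpos r).ne' (hpos (r + 1)).ne'
      rw [hld] at hlog1 hlog2
      have h3 : |b (r + 1) - b r| ≤ c r := abs_le.mpr ⟨by linarith, by linarith⟩
      simpa [hd] using h3
    have hdsum : Summable fun r => |d r| :=
      Summable.of_nonneg_of_le (fun r => abs_nonneg _) hdabs hsum
    have hds : Summable d := hdsum.of_abs
    have htel : ∀ n, ∑ i ∈ Finset.range n, d i = b n - b 0 :=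
      fun n => Finset.sum_range_sub b n
    set S : ℝ := ∑' n, d n with hSdef
    have hS : HasSum d S := hds.hasSum
    have hbtend : Tendsto b atTop (nhds (S + b 0)) := by
      have h1 := hS.tendsto_sum_nat
      have h2 : Tendsto (fun n => b n - b 0) atTop (nhds S) :=
        h1.congr fun n => htel n
      have h3 := h2.add_const (b 0)
      simpa using h3
    set L : ℝ := S + b 0 with hL
    have haexp : ∀ n, a n = Real.exp (b n) := fun n => (Real.exp_log (hpos n)).symm
    refine ⟨Real.exp L, ?_, ?_⟩
    · exact ((Real.continuous_exp.tendsto L).comp hbtend).congr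
        fun n => (haexp n).symm
    · intro _ r
      have htailc : Summable fun s => c (r + s) := by
        have h := (summable_nat_add_iff r).2 hsum
        exact h.congr fun s => by rw [add_comm]
      have htaild : Summable fun s => d (r + s) := by
        have h := (summable_nat_add_iff r).2 hds
        exact h.congr fun s => by rw [add_comm]
      have htaildabs : Summable fun s => |d (r + s)| := by
        have h := (summable_nat_add_iff r).2 hdsum
        exact h.congr fun s => by rw [add_comm]
      -- tail sum equals L - b r
      have hgt : Tendsto (fun m => ∑ s ∈ Finset.range m, d (r + s)) atTop
          (nhds (L - b r)) := by
        have h1 : ∀ m, ∑ s ∈ Finset.range m, d (r + s) = b (r + m) - b r := by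
          intro m
          have := Finset.sum_range_sub (fun s => b (r + s)) m
          simpa [hd, Nat.add_assoc, Finset.sum_sub_distrib] using this
        have h2 : Tendsto (fun m => b (r + m)) atTop (nhds L) := by
          have h3 := hbtend.comp (tendsto_add_atTop_nat r)
          exact h3.congr fun m => by simp [add_comm]
        have h4 := h2.sub_const (b r)
        exact h4.congr fun m => (h1 m).symm
      have heq : (∑' s, d (r + s)) = L - b r :=
        tendsto_nhds_unique htaild.hasSum.tendsto_sum_nat hgt
      have habs : |L - b r| ≤ ∑' s, c (r + s) := by
        rw [← heq]
        calc |∑' s, d (r + s)| ≤ ∑' s, |d (r + s)| := by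
              have h5 : ‖∑' s, d (r + s)‖ ≤ ∑' s, ‖d (r + s)‖ :=
                norm_tsum_le_tsum_norm
                  (htaildabs.congr fun s => (Real.norm_eq_abs _).symm)
              rw [Real.norm_eq_abs] at h5
              exact h5.trans_eq (tsum_congr fun s => Real.norm_eq_abs _)
          _ ≤ ∑' s, c (r + s) :=
              Summable.tsum_le_tsum (fun s => hdabs (r + s)) htaildabs htailc
      have hdiv : a r / Real.exp L = Real.exp (b r - L) := by
        rw [haexp r, Real.exp_sub]
      rw [hdiv]
      rw [abs_le] at habs
      constructor
      · exact Real.exp_le_exp.2 (by linarith [habs.2])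
      · exact Real.exp_le_exp.2 (by linarith [habs.1])
  · -- some a r is zero; then a is eventually zero
    push_neg at hpos
    obtain ⟨r0, hr0⟩ := hpos
    have hr0z : a r0 = 0 := le_antisymm hr0 (ha_nonneg r0)
    have hzero : ∀ n, a (r0 + n) = 0 := by
      intro n
      induction n with
      | zero => simpa using hr0z
      | succ n ih =>
        by_contra h
        have hp : 0 < a (r0 + n + 1) :=
          lt_of_le_of_ne (ha_nonneg _) (Ne.symm h)
        obtain ⟨h1, _⟩ := hstep E hE (r0 + n) hp
        have h2 : 0 < a (r0 + n) / a (r0 + n + 1) :=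
          lt_of_lt_of_le (Real.exp_pos _) h1
        have h3 : 0 < a (r0 + n) := by
          have := mul_pos h2 hp
          rwa [div_mul_cancel₀ _ hp.ne'] at this
        exact absurd ih h3.ne'
    refine ⟨0, ?_, fun h => absurd h (lt_irrefl 0)⟩
    have hev : ∀ᶠ n in atTop, a n = 0 := by
      filter_upwards [eventually_ge_atTop r0] with n hn
      obtain ⟨k, rfl⟩ := Nat.exists_eq_add_of_le hn
      exact hzero k
    exact Tendsto.congr' (hev.mono fun n h => h.symm) tendsto_const_nhds
end

section
/- For the transfer matrix M_r of the r-range potential φ_r(x) = Σ_{k=0}^{r-1} ψ_k(x_0,x_k), the ratio distortion constant satisfies D_0 := 2 max_{b,c,c' ∈ A^r} log( (M_r^r(c,b) M_r^{r+1}(c',b)) / (M_r^{r+1}(c,b) M_r^r(c',b)) ) ≤ 12·Σ_{k=1}^{r} k‖ψ_k‖_∞, using |S_r φ_r(cb) − S_{r+1} φ_r(cb)| ≤ 3 Σ_{k=1}^r k‖ψ_k‖_∞ type bounds. -/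
open Filter MeasureTheory

/-- The `r`-range truncation `φ_r(x) = Σ_{k=0}^{r-1} ψ_k(x_0, x_k)`. -/
noncomputable def phir {A : Type*} (ψ : ℕ → A → A → ℝ) (r : ℕ) : (ℕ → A) → ℝ :=
  fun x => ∑ k ∈ Finset.range r, ψ k (x 0) (x k)

/-- Sup norm `‖ψ_k‖_∞` of the pair interaction `ψ_k`. -/
noncomputable def pairNorm {A : Type*} [Fintype A] [Nonempty A]
    (ψ : ℕ → A → A → ℝ) (k : ℕ) : ℝ :=
  ⨆ t : A × A, |ψ k t.1 t.2|

/-- The transfer matrix `M_r(a,b) = exp(φ̃_r(a b_{r-1}))` on allowed transitions. -/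
noncomputable def transferM {A : Type*} [Fintype A] [DecidableEq A]
    (ψ : ℕ → A → A → ℝ) (r : ℕ) (hr : 0 < r) :
    Matrix (Fin r → A) (Fin r → A) ℝ :=
  fun a b =>
    if ∀ i : Fin (r - 1), a ⟨(i : ℕ) + 1, by have := i.isLt; omega⟩ =
        b ⟨(i : ℕ), by have := i.isLt; omega⟩ then
      Real.exp (phir ψ r
        (fun i => if h : i < r then a ⟨i, h⟩ else b ⟨r - 1, Nat.sub_lt hr Nat.one_pos⟩))
    else 0

namespace DCB

open scoped Classical

variable {A : Type*} [Fintype A] [DecidableEq A] [Nonempty A]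

/-- extend a finite word by a default value -/
noncomputable def nm {r : ℕ} (a : Fin r → A) : ℕ → A :=
  fun i => if h : i < r then a ⟨i, h⟩ else Classical.arbitrary A

/-- Birkhoff sum of `phir` along a word. -/
noncomputable def S (ψ : ℕ → A → A → ℝ) (r n : ℕ) (w : ℕ → A) : ℝ :=
  ∑ j ∈ Finset.range n, phir ψ r (fun i => w (j + i))

/-- the concatenated word for the `n`-step path from `c` to `b` -/
noncomputable def word (r n : ℕ) (c b : Fin r → A) : ℕ → A :=
  fun i => if i < r then nm c i else nm b (i - n)

/-- the concatenated word `c x b` -/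
noncomputable def wordx (r : ℕ) (c : Fin r → A) (x : A) (b : Fin r → A) : ℕ → A :=
  fun i => if i < r then nm c i else if i = r then x else nm b (i - r - 1)

lemma phir_congr {ψ : ℕ → A → A → ℝ} {r : ℕ} {y z : ℕ → A}
    (h : ∀ i < r, y i = z i) (hr : 0 < r) : phir ψ r y = phir ψ r z := by
  unfold phir
  refine Finset.sum_congr rfl fun k hk => ?_
  rw [h 0 hr, h k (Finset.mem_range.1 hk)]

lemma transferM_apply (ψ : ℕ → A → A → ℝ) (r : ℕ) (hr : 0 < r) (a b : Fin r → A) :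
    transferM ψ r hr a b =
      if ∀ j, j + 1 < r → nm a (j + 1) = nm b j then Real.exp (phir ψ r (nm a)) else 0 := by
  unfold transferM
  have hcond : (∀ i : Fin (r - 1), a ⟨(i : ℕ) + 1, by have := i.isLt; omega⟩ =
      b ⟨(i : ℕ), by have := i.isLt; omega⟩) ↔ (∀ j, j + 1 < r → nm a (j + 1) = nm b j) := by
    constructor
    · intro H j hj
      have hj' : j < r - 1 := by omega
      have := H ⟨j, hj'⟩
      simp only [nm]
      rw [dif_pos hj, dif_pos (by omega : j < r)]
      exact this
    · intro H i
      have hi : (i : ℕ) + 1 < r := by have := i.isLt; omega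
      have := H i hi
      simp only [nm, dif_pos hi, dif_pos (by omega : (i : ℕ) < r)] at this
      exact this
  by_cases h : ∀ j, j + 1 < r → nm a (j + 1) = nm b j
  · rw [if_pos (hcond.2 h), if_pos h]
    congr 1
    refine phir_congr (fun i hi => ?_) hr
    simp [nm, dif_pos hi, hi]
  · rw [if_neg (fun H => h (hcond.1 H)), if_neg h]

lemma nm_coe {r : ℕ} (a : Fin r → A) (j : Fin r) : nm a (j : ℕ) = a j := by
  simp [nm, j.isLt]

lemma pow_apply (ψ : ℕ → A → A → ℝ) (r : ℕ) (hr : 0 < r) :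
    ∀ n, n ≤ r → ∀ c b : Fin r → A, (transferM ψ r hr ^ n) c b =
      if ∀ j, j + n < r → nm c (j + n) = nm b j
      then Real.exp (S ψ r n (word r n c b)) else 0 := by
  intro n
  induction n with
  | zero =>
    intro _ c b
    rw [pow_zero, Matrix.one_apply]
    by_cases h : c = b
    · rw [if_pos h, if_pos, S]
      · simp
      · intro j hj; rw [h, add_zero]
    · rw [if_neg h, if_neg]
      intro H
      exact h (funext fun j => by
        have := H (j : ℕ) (by simpa using j.isLt)
        rw [add_zero] at this
        rwa [nm_coe, nm_coe] at this)
  | succ n ih =>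
    intro hn c b
    have hnr : n < r := by omega
    rw [pow_succ, Matrix.mul_apply]
    set astar : Fin r → A := fun j => if (j : ℕ) = 0 then nm c n else nm b ((j : ℕ) - 1)
      with hastar_def
    have hastar : ∀ m, m < r → nm astar m = if m = 0 then nm c n else nm b (m - 1) := by
      intro m hm
      simp only [nm, dif_pos hm, hastar_def]
    rw [Finset.sum_eq_single_of_mem astar (Finset.mem_univ _)]
    · -- evaluate the term at astar
      rw [ih (by omega), transferM_apply]
      by_cases hcb : ∀ j, j + (n + 1) < r → nm c (j + (n + 1)) = nm b j
      · have hca : ∀ j, j + n < r → nm c (j + n) = nm astar j := by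
          intro j hj
          rw [hastar j (by omega)]
          by_cases hj0 : j = 0
          · subst hj0; simp
          · rw [if_neg hj0]
            have := hcb (j - 1) (by omega)
            rw [(by omega : j - 1 + (n + 1) = j + n)] at this
            exact this
        have hab : ∀ j, j + 1 < r → nm astar (j + 1) = nm b j := by
          intro j hj
          rw [hastar (j + 1) (by omega), if_neg (by omega)]
          simp
        rw [if_pos hca, if_pos hab, if_pos hcb, ← Real.exp_add]
        congr 1
        rw [S, S, Finset.sum_range_succ]
        congr 1
        · refine Finset.sum_congr rfl fun j hj => ?_
          have hjn : j < n := Finset.mem_range.1 hj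
          refine phir_congr (fun i hi => ?_) hr
          by_cases hm : j + i < r
          · simp [word, hm]
          · have h1 : ¬ j + i < r := hm
            have hge : r ≤ j + i := by omega
            have hlt : j + i - n < r := by omega
            have hne0 : j + i - n ≠ 0 := by omega
            simp only [word, if_neg h1]
            rw [hastar _ hlt, if_neg hne0, (by omega : j + i - n - 1 = j + i - (n + 1))]
        · refine phir_congr (fun i hi => ?_) hr
          rw [hastar i hi]
          by_cases hi0 : i = 0
          · subst hi0
            simp [word, hnr]
          · rw [if_neg hi0]
            by_cases hm : n + i < r
            · have := hcb (i - 1) (by omega)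
              rw [(by omega : i - 1 + (n + 1) = n + i)] at this
              simp only [word, if_pos hm]
              exact (this).symm
            · simp only [word, if_neg hm]
              rw [(by omega : n + i - (n + 1) = i - 1)]
      · -- condition fails
        rw [if_neg hcb, if_neg, zero_mul]
        intro hca
        apply hcb
        intro j hj
        have := hca (j + 1) (by omega)
        rw [hastar (j + 1) (by omega), if_neg (by omega)] at this
        simpa [(by omega : j + 1 + n = j + (n + 1))] using this
    · -- other terms vanish
      intro a _ hne
      rw [ih (by omega), transferM_apply]
      by_cases h1 : ∀ j, j + n < r → nm c (j + n) = nm a j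
      · by_cases h2 : ∀ j, j + 1 < r → nm a (j + 1) = nm b j
        · exfalso
          apply hne
          funext j
          by_cases hj0 : (j : ℕ) = 0
          · have h0 := h1 0 (by omega)
            rw [zero_add] at h0
            have ha : astar j = nm c n := by simp [hastar_def, hj0]
            rw [ha, ← nm_coe a j, hj0, ← h0]
          · have hj1 : 1 ≤ (j : ℕ) := by omega
            have := h2 ((j : ℕ) - 1) (by have := j.isLt; omega)
            rw [(by omega : (j : ℕ) - 1 + 1 = (j : ℕ)), nm_coe] at this
            rw [this]
            simp only [hastar_def, if_neg hj0]
        · rw [if_neg h2, mul_zero]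
      · rw [if_neg h1, zero_mul]

lemma pow_r1_apply (ψ : ℕ → A → A → ℝ) (r : ℕ) (hr : 0 < r) (c b : Fin r → A) :
    (transferM ψ r hr ^ (r + 1)) c b =
      ∑ x : A, Real.exp (S ψ r (r + 1) (wordx r c x b)) := by
  rw [pow_succ, Matrix.mul_apply]
  set e : A → (Fin r → A) := fun x j => if (j : ℕ) = 0 then x else nm b ((j : ℕ) - 1)
    with he_def
  have he : ∀ (x : A) (m : ℕ), m < r → nm (e x) m = if m = 0 then x else nm b (m - 1) := by
    intro x m hm; simp only [nm, dif_pos hm, he_def]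
  have hinj : Function.Injective e := by
    intro x y hxy
    have := congrFun hxy ⟨0, hr⟩
    simpa [he_def] using this
  have hzero : ∀ a : Fin r → A, a ∉ Finset.univ.image e →
      (transferM ψ r hr ^ r) c a * transferM ψ r hr a b = 0 := by
    intro a ha
    rw [transferM_apply]
    rw [if_neg, mul_zero]
    intro hall
    apply ha
    refine Finset.mem_image.2 ⟨a ⟨0, hr⟩, Finset.mem_univ _, ?_⟩
    funext j
    by_cases hj0 : (j : ℕ) = 0
    · have hj' : j = ⟨0, hr⟩ := Fin.ext hj0
      rw [hj']
      simp [he_def]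
    · have := hall ((j : ℕ) - 1) (by have := j.isLt; omega)
      rw [(by omega : (j : ℕ) - 1 + 1 = (j : ℕ)), nm_coe] at this
      simp only [he_def, if_neg hj0]
      exact this.symm
  have key : ∀ x : A, (transferM ψ r hr ^ r) c (e x) * transferM ψ r hr (e x) b =
      Real.exp (S ψ r (r + 1) (wordx r c x b)) := by
    intro x
    rw [pow_apply ψ r hr r le_rfl, transferM_apply,
      if_pos (fun j hj => absurd hj (by omega)),
      if_pos (fun j hj => by
        rw [he x (j + 1) hj, if_neg (by omega)]
        simp), ← Real.exp_add]
    congr 1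
    rw [S, S, Finset.sum_range_succ]
    congr 1
    · refine Finset.sum_congr rfl fun j hj => ?_
      have hjr : j < r := Finset.mem_range.1 hj
      refine phir_congr (fun i hi => ?_) hr
      by_cases hm : j + i < r
      · simp [word, wordx, hm]
      · have hlt : j + i - r < r := by omega
        simp only [word, wordx, if_neg hm]
        rw [he x (j + i - r) hlt]
        by_cases hmr : j + i = r
        · rw [if_pos (by omega), if_pos hmr]
        · rw [if_neg (by omega), if_neg hmr, (by omega : j + i - r - 1 = j + i - r - 1)]
    · refine phir_congr (fun i hi => ?_) hr
      rw [he x i hi]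
      by_cases hi0 : i = 0
      · subst hi0
        simp [wordx]
      · rw [if_neg hi0]
        simp only [wordx, if_neg (by omega : ¬ r + i < r), if_neg (by omega : ¬ r + i = r)]
        rw [(by omega : r + i - r - 1 = i - 1)]
  calc (∑ a : Fin r → A, (transferM ψ r hr ^ r) c a * transferM ψ r hr a b)
      = ∑ a ∈ Finset.univ.image e, (transferM ψ r hr ^ r) c a * transferM ψ r hr a b :=
        (Finset.sum_subset (Finset.subset_univ _) (fun a _ ha => hzero a ha)).symm
    _ = ∑ x : A, (transferM ψ r hr ^ r) c (e x) * transferM ψ r hr (e x) b :=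
        Finset.sum_image (fun x _ y _ h => hinj h)
    _ = ∑ x : A, Real.exp (S ψ r (r + 1) (wordx r c x b)) :=
        Finset.sum_congr rfl (fun x _ => key x)

lemma pow_r_apply (ψ : ℕ → A → A → ℝ) (r : ℕ) (hr : 0 < r) (c b : Fin r → A) :
    (transferM ψ r hr ^ r) c b = Real.exp (S ψ r r (word r r c b)) := by
  rw [pow_apply ψ r hr r le_rfl, if_pos (fun j hj => absurd hj (by omega))]

lemma abs_le_pairNorm (ψ : ℕ → A → A → ℝ) (k : ℕ) (s t : A) :
    |ψ k s t| ≤ pairNorm ψ k := by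
  rw [pairNorm]
  exact le_ciSup (f := fun t : A × A => |ψ k t.1 t.2|)
    (Set.Finite.bddAbove (Set.finite_range _)) ((s, t) : A × A)

lemma pairNorm_nonneg (ψ : ℕ → A → A → ℝ) (k : ℕ) : 0 ≤ pairNorm ψ k :=
  le_trans (abs_nonneg _) (abs_le_pairNorm ψ k (Classical.arbitrary A) (Classical.arbitrary A))

lemma sum_range_le_T (ψ : ℕ → A → A → ℝ) (r : ℕ) :
    ∑ k ∈ Finset.range r, (k : ℝ) * pairNorm ψ k ≤
      ∑ k ∈ Finset.Icc 1 r, (k : ℝ) * pairNorm ψ k := by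
  have h1 : ∑ k ∈ Finset.Ico 1 r, (k : ℝ) * pairNorm ψ k
      = ∑ k ∈ Finset.range r, (k : ℝ) * pairNorm ψ k := by
    refine Finset.sum_subset ?_ ?_
    · intro k hk; simp at hk ⊢; omega
    · intro k hk hk'
      simp only [Finset.mem_range] at hk
      simp only [Finset.mem_Ico] at hk'
      have h0 : k = 0 := by omega
      rw [h0]; simp
  rw [← h1]
  refine Finset.sum_le_sum_of_subset_of_nonneg ?_ ?_
  · intro k hk; simp at hk ⊢; omega
  · intro k _ _
    exact mul_nonneg (Nat.cast_nonneg k) (pairNorm_nonneg ψ k)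

lemma estimate (ψ : ℕ → A → A → ℝ) (r : ℕ) (hr : 0 < r) (c b : Fin r → A) (x : A) :
    |S ψ r r (word r r c b) - S ψ r (r + 1) (wordx r c x b) + ψ 0 x x| ≤
      3 * ∑ k ∈ Finset.Icc 1 r, (k : ℝ) * pairNorm ψ k := by
  set T := ∑ k ∈ Finset.Icc 1 r, (k : ℝ) * pairNorm ψ k with hT
  set w1 := word r r c b with hw1
  set w2 := wordx r c x b with hw2
  set X := ∑ j ∈ Finset.range r,
    (phir ψ r (fun i => w1 (j + i)) - phir ψ r (fun i => w2 (j + i))) with hX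
  set Y := phir ψ r (fun i => w2 (r + i)) - ψ 0 x x with hY
  have hE : S ψ r r w1 - S ψ r (r + 1) w2 + ψ 0 x x = X - Y := by
    rw [hX, hY, S, S, Finset.sum_range_succ, Finset.sum_sub_distrib]
    ring
  -- bound X
  have hXle : |X| ≤ 2 * T := by
    set t : ℕ → ℕ → ℝ := fun j k =>
      ψ k (w1 (j + 0)) (w1 (j + k)) - ψ k (w2 (j + 0)) (w2 (j + k)) with ht
    have hXeq : X = ∑ j ∈ Finset.range r, ∑ k ∈ Finset.range r, t j k := by
      refine Finset.sum_congr rfl fun j hj => ?_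
      rw [phir, phir, ← Finset.sum_sub_distrib]
    have htzero : ∀ j k, j < r → j + k < r → t j k = 0 := by
      intro j k hj hjk
      have e1 : w1 (j + 0) = w2 (j + 0) := by
        simp only [hw1, hw2, word, wordx, if_pos (by omega : j + 0 < r)]
      have e2 : w1 (j + k) = w2 (j + k) := by
        simp only [hw1, hw2, word, wordx, if_pos hjk]
      rw [ht]; simp only [e1, e2, sub_self]
    have htbd : ∀ j k, |t j k| ≤ 2 * pairNorm ψ k := by
      intro j k
      calc |t j k| ≤ |ψ k (w1 (j + 0)) (w1 (j + k))| + |ψ k (w2 (j + 0)) (w2 (j + k))| :=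
            abs_sub _ _
        _ ≤ pairNorm ψ k + pairNorm ψ k :=
            add_le_add (abs_le_pairNorm _ _ _ _) (abs_le_pairNorm _ _ _ _)
        _ = 2 * pairNorm ψ k := by ring
    calc |X| ≤ ∑ j ∈ Finset.range r, ∑ k ∈ Finset.range r, |t j k| := by
          rw [hXeq]
          refine (Finset.abs_sum_le_sum_abs _ _).trans ?_
          exact Finset.sum_le_sum fun j _ => Finset.abs_sum_le_sum_abs _ _
      _ = ∑ k ∈ Finset.range r, ∑ j ∈ Finset.range r, |t j k| := Finset.sum_comm
      _ ≤ ∑ k ∈ Finset.range r, 2 * ((k : ℝ) * pairNorm ψ k) := by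
          refine Finset.sum_le_sum fun k hk => ?_
          have hkr : k < r := Finset.mem_range.1 hk
          have hsub : ∑ j ∈ Finset.range r, |t j k| = ∑ j ∈ Finset.Ico (r - k) r, |t j k| := by
            refine (Finset.sum_subset (by intro j hj; simp at hj ⊢; omega) ?_).symm
            intro j hj hj'
            simp only [Finset.mem_range] at hj
            simp only [Finset.mem_Ico] at hj'
            rw [htzero j k hj (by omega), abs_zero]
          rw [hsub]
          calc ∑ j ∈ Finset.Ico (r - k) r, |t j k|
              ≤ ∑ j ∈ Finset.Ico (r - k) r, 2 * pairNorm ψ k :=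
                Finset.sum_le_sum fun j _ => htbd j k
            _ = (k : ℝ) * (2 * pairNorm ψ k) := by
                rw [Finset.sum_const, Nat.card_Ico, nsmul_eq_mul]
                congr 1
                exact_mod_cast congrArg (Nat.cast (R := ℝ)) (by omega : r - (r - k) = k)
            _ = 2 * ((k : ℝ) * pairNorm ψ k) := by ring
      _ = 2 * ∑ k ∈ Finset.range r, (k : ℝ) * pairNorm ψ k := by
          rw [Finset.mul_sum]
      _ ≤ 2 * T := by
          have := sum_range_le_T ψ r
          rw [hT]; linarith
  -- bound Y
  have hYle : |Y| ≤ T := by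
    have hx0 : w2 (r + 0) = x := by
      simp [hw2, wordx]
    have hYeq : Y = ∑ k ∈ Finset.Ico 1 r, ψ k x (w2 (r + k)) := by
      rw [hY, phir, Finset.range_eq_Ico, Finset.sum_eq_sum_Ico_succ_bot hr]
      simp only [hx0]
      ring
    rw [hYeq]
    calc |∑ k ∈ Finset.Ico 1 r, ψ k x (w2 (r + k))|
        ≤ ∑ k ∈ Finset.Ico 1 r, |ψ k x (w2 (r + k))| := Finset.abs_sum_le_sum_abs _ _
      _ ≤ ∑ k ∈ Finset.Ico 1 r, (k : ℝ) * pairNorm ψ k := by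
          refine Finset.sum_le_sum fun k hk => ?_
          have hk1 : 1 ≤ k := (Finset.mem_Ico.1 hk).1
          refine (abs_le_pairNorm ψ k _ _).trans ?_
          exact le_mul_of_one_le_left (pairNorm_nonneg ψ k) (by exact_mod_cast hk1)
      _ ≤ T := by
          rw [hT]
          refine Finset.sum_le_sum_of_subset_of_nonneg
            (by intro k hk; simp at hk ⊢; omega) ?_
          intro k _ _
          exact mul_nonneg (Nat.cast_nonneg k) (pairNorm_nonneg ψ k)
  rw [hE]
  calc |X - Y| ≤ |X| + |Y| := abs_sub _ _
    _ ≤ 2 * T + T := add_le_add hXle hYle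
    _ = 3 * T := by ring

end DCB

/-- The ratio-distortion constant
`D₀ = 2 max_{b,c,c'} log (M_r^r(c,b) M_r^{r+1}(c',b) / (M_r^{r+1}(c,b) M_r^r(c',b)))`
is bounded by `12 Σ_{k=1}^r k‖ψ_k‖`. -/


theorem distortion_constant_bound {A : Type*} [Fintype A] [DecidableEq A] [Nonempty A]
    (ψ : ℕ → A → A → ℝ) (r : ℕ) (hr : 0 < r) :
    2 * (⨆ t : (Fin r → A) × (Fin r → A) × (Fin r → A),
        Real.log ((((transferM ψ r hr) ^ r) t.2.1 t.1 *
            ((transferM ψ r hr) ^ (r + 1)) t.2.2 t.1) /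
          ((((transferM ψ r hr) ^ (r + 1)) t.2.1 t.1) *
            ((transferM ψ r hr) ^ r) t.2.2 t.1))) ≤
      12 * ∑ k ∈ Finset.Icc 1 r, (k : ℝ) * pairNorm ψ k := by
  classical
  set T := ∑ k ∈ Finset.Icc 1 r, (k : ℝ) * pairNorm ψ k with hT
  have hT0 : 0 ≤ T := Finset.sum_nonneg fun k _ =>
    mul_nonneg (Nat.cast_nonneg k) (DCB.pairNorm_nonneg ψ k)
  have hsup : (⨆ t : (Fin r → A) × (Fin r → A) × (Fin r → A),
      Real.log ((((transferM ψ r hr) ^ r) t.2.1 t.1 *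
          ((transferM ψ r hr) ^ (r + 1)) t.2.2 t.1) /
        ((((transferM ψ r hr) ^ (r + 1)) t.2.1 t.1) *
          ((transferM ψ r hr) ^ r) t.2.2 t.1))) ≤ 6 * T := by
    apply ciSup_le
    rintro ⟨b, c, c'⟩
    dsimp only
    rw [DCB.pow_r_apply, DCB.pow_r_apply, DCB.pow_r1_apply, DCB.pow_r1_apply]
    have hQpos : 0 < ∑ x : A, Real.exp (DCB.S ψ r (r + 1) (DCB.wordx r c x b)) :=
      Finset.sum_pos (fun x _ => Real.exp_pos _) Finset.univ_nonempty
    have hQ'pos : 0 < ∑ x : A, Real.exp (DCB.S ψ r (r + 1) (DCB.wordx r c' x b)) :=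
      Finset.sum_pos (fun x _ => Real.exp_pos _) Finset.univ_nonempty
    have hx : ∀ x : A,
        Real.exp (DCB.S ψ r r (DCB.word r r c b)) *
          Real.exp (DCB.S ψ r (r + 1) (DCB.wordx r c' x b)) ≤
        Real.exp (6 * T) * (Real.exp (DCB.S ψ r (r + 1) (DCB.wordx r c x b)) *
          Real.exp (DCB.S ψ r r (DCB.word r r c' b))) := by
      intro x
      rw [← Real.exp_add, ← Real.exp_add, ← Real.exp_add, Real.exp_le_exp]
      have h1 := DCB.estimate ψ r hr c b x
      have h2 := DCB.estimate ψ r hr c' b x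
      rw [← hT] at h1 h2
      have h1' := abs_le.1 h1
      have h2' := abs_le.1 h2
      obtain ⟨h1a, h1b⟩ := h1'
      obtain ⟨h2a, h2b⟩ := h2'
      linarith
    have hkey : Real.exp (DCB.S ψ r r (DCB.word r r c b)) *
        (∑ x : A, Real.exp (DCB.S ψ r (r + 1) (DCB.wordx r c' x b))) ≤
        Real.exp (6 * T) * ((∑ x : A, Real.exp (DCB.S ψ r (r + 1) (DCB.wordx r c x b))) *
          Real.exp (DCB.S ψ r r (DCB.word r r c' b))) := by
      rw [Finset.mul_sum]
      have : Real.exp (6 * T) * ((∑ x : A, Real.exp (DCB.S ψ r (r + 1) (DCB.wordx r c x b))) *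
          Real.exp (DCB.S ψ r r (DCB.word r r c' b))) =
          ∑ x : A, Real.exp (6 * T) * (Real.exp (DCB.S ψ r (r + 1) (DCB.wordx r c x b)) *
            Real.exp (DCB.S ψ r r (DCB.word r r c' b))) := by
        rw [Finset.sum_mul, Finset.mul_sum]
      rw [this]
      exact Finset.sum_le_sum fun x _ => hx x
    rw [Real.log_le_iff_le_exp (div_pos (mul_pos (Real.exp_pos _) hQ'pos)
      (mul_pos hQpos (Real.exp_pos _)))]
    rw [div_le_iff₀ (mul_pos hQpos (Real.exp_pos _))]
    exact hkey
  linarith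
end
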